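/- Let c > 0 and let (a_n)_{n∈ℕ} be a sequence of real numbers with |a_n| ≤ c(n+1) for all n ∈ ℕ. Let κ, n₀ ∈ ℕ₊ and N be such that n₀ + κ ≤ N and κ ≥ log₂ N. Suppose that for some E ≥ 8c one has |a_{n₀+i}| ≤ (3/2)ⁱ E for all 0 ≤ i < κ. Then Σ_{i=0}^∞ |a_{n₀+i}| 2^{−i} ≤ 5E. -/
import Mathlib


/-- Mild tail bound: if `|a_n| ≤ c(n+1)` for all `n`, `n₀ + κ ≤ N`,
`κ ≥ log₂ N`, and `|a_{n₀+i}| ≤ (3/2)ⁱ E` for all `0 ≤ i < κ` with `E ≥ 8c`,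
then `∑_{i=0}^∞ |a_{n₀+i}| 2^{-i} ≤ 5E`. -/
theorem mild_tail_bound (c : ℝ) (hc : 0 < c) (a : ℕ → ℝ)
    (ha : ∀ n : ℕ, |a n| ≤ c * ((n : ℝ) + 1))
    (κ n₀ : ℕ) (hκ : 0 < κ) (hn₀ : 0 < n₀) (N : ℝ)
    (hn₀κN : (n₀ : ℝ) + (κ : ℝ) ≤ N) (hκN : Real.logb 2 N ≤ (κ : ℝ))
    (E : ℝ) (hE : 8 * c ≤ E)
    (hbound : ∀ i < κ, |a (n₀ + i)| ≤ (3 / 2 : ℝ) ^ i * E) :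
    ∑' i : ℕ, |a (n₀ + i)| * (1 / 2 : ℝ) ^ i ≤ 5 * E := by
  have hE0 : (0:ℝ) < E := lt_of_lt_of_le (by linarith) hE
  set f : ℕ → ℝ := fun i => |a (n₀ + i)| * (1 / 2 : ℝ) ^ i with hf
  set g : ℕ → ℝ := fun i => c * ((n₀ : ℝ) + i + 1) * (1 / 2 : ℝ) ^ i with hg
  have hfg : ∀ i, f i ≤ g i := by
    intro i
    have := ha (n₀ + i)
    have h2 : (0:ℝ) ≤ (1/2:ℝ)^i := by positivity
    have : |a (n₀ + i)| ≤ c * ((n₀ : ℝ) + i + 1) := by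
      push_cast at this ⊢; linarith
    exact mul_le_mul_of_nonneg_right this h2
  have hf0 : ∀ i, 0 ≤ f i := fun i => by positivity
  -- summability facts
  have hsum_i : Summable (fun i : ℕ => (i : ℝ) * (1/2:ℝ)^i) := by
    have := summable_pow_mul_geometric_of_norm_lt_one (R := ℝ) 1
      (r := (1/2:ℝ)) (by rw [Real.norm_eq_abs, abs_of_pos]; norm_num; norm_num)
    simpa using this
  have hsum_geo : Summable (fun i : ℕ => (1/2:ℝ)^i) :=
    summable_geometric_of_lt_one (by norm_num) (by norm_num)
  have hgsplit : ∀ (A : ℝ), (fun i : ℕ => (A + i) * (1/2:ℝ)^i)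
      = fun i : ℕ => A * (1/2:ℝ)^i + (i:ℝ) * (1/2:ℝ)^i := by
    intro A; funext i; ring
  have hsum_aff : ∀ A : ℝ, Summable (fun i : ℕ => (A + i) * (1/2:ℝ)^i) := by
    intro A; rw [hgsplit A]
    exact (hsum_geo.mul_left A).add hsum_i
  have hsumg : Summable g := by
    have : g = fun i : ℕ => c * (((n₀:ℝ) + 1 + i) * (1/2:ℝ)^i) := by
      funext i; simp only [hg]; ring
    rw [this]; exact (hsum_aff ((n₀:ℝ)+1)).mul_left c
  have hsumf : Summable f := Summable.of_nonneg_of_le hf0 hfg hsumg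
  -- tsum values
  have htsum_geo : ∑' i : ℕ, (1/2:ℝ)^i = 2 := by
    rw [tsum_geometric_of_lt_one (by norm_num) (by norm_num)]; norm_num
  have htsum_i : ∑' i : ℕ, (i:ℝ) * (1/2:ℝ)^i = 2 := by
    have := tsum_coe_mul_geometric_of_norm_lt_one (r := (1/2:ℝ))
      (by rw [Real.norm_eq_abs, abs_of_pos]; norm_num; norm_num)
    rw [this]; norm_num
  have htsum_aff : ∀ A : ℝ, ∑' i : ℕ, (A + i) * (1/2:ℝ)^i = 2 * A + 2 := by
    intro A
    rw [hgsplit A, Summable.tsum_add (hsum_geo.mul_left A) hsum_i, tsum_mul_left,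
      htsum_geo, htsum_i]; ring
  -- 2^κ ≥ n₀ + κ
  have hNpos : (0:ℝ) < N := by
    have h1 : (1:ℝ) ≤ n₀ := by exact_mod_cast hn₀
    have h2 : (1:ℝ) ≤ κ := by exact_mod_cast hκ
    linarith
  have hpow : (n₀:ℝ) + κ ≤ 2 ^ κ := by
    have := (Real.logb_le_iff_le_rpow (by norm_num) hNpos).mp hκN
    calc (n₀:ℝ) + κ ≤ N := hn₀κN
      _ ≤ (2:ℝ) ^ (κ:ℝ) := this
      _ = 2 ^ κ := by rw [Real.rpow_natCast]
  have hpow2 : (2:ℝ) ≤ 2 ^ κ := by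
    calc (2:ℝ) = 2^1 := by norm_num
      _ ≤ 2^κ := pow_le_pow_right₀ (by norm_num) hκ
  -- split the sum
  rw [← Summable.sum_add_tsum_nat_add κ hsumf]
  have hpiece1 : ∑ i ∈ Finset.range κ, f i ≤ 4 * E := by
    have hterm : ∀ i ∈ Finset.range κ, f i ≤ (3/4:ℝ)^i * E := by
      intro i hi
      rw [Finset.mem_range] at hi
      have h1 := hbound i hi
      have h2 : (0:ℝ) ≤ (1/2:ℝ)^i := by positivity
      calc f i ≤ ((3/2:ℝ)^i * E) * (1/2:ℝ)^i :=
            mul_le_mul_of_nonneg_right h1 h2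
        _ = (3/4:ℝ)^i * E := by
            rw [mul_right_comm, ← mul_pow]; norm_num
    calc ∑ i ∈ Finset.range κ, f i ≤ ∑ i ∈ Finset.range κ, (3/4:ℝ)^i * E :=
          Finset.sum_le_sum hterm
      _ ≤ ∑' i : ℕ, (3/4:ℝ)^i * E := by
          refine Summable.sum_le_tsum _ (fun i _ => by positivity) ?_
          exact (summable_geometric_of_lt_one (by norm_num) (by norm_num)).mul_right E
      _ = 4 * E := by
          rw [tsum_mul_right, tsum_geometric_of_lt_one (by norm_num) (by norm_num)]
          norm_num
  have hpiece2 : ∑' i : ℕ, f (i + κ) ≤ E := by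
    have hle : ∑' i : ℕ, f (i + κ) ≤ ∑' i : ℕ, g (i + κ) := by
      refine Summable.tsum_le_tsum (fun i => hfg (i + κ)) ?_ ?_
      · exact hsumf.comp_injective (add_left_injective κ)
      · exact hsumg.comp_injective (add_left_injective κ)
    have hgval : ∑' i : ℕ, g (i + κ) = c * (1/2:ℝ)^κ * (2 * ((n₀:ℝ) + κ) + 4) := by
      have : (fun i : ℕ => g (i + κ))
          = fun i : ℕ => (c * (1/2:ℝ)^κ) * ((((n₀:ℝ) + κ + 1) + i) * (1/2:ℝ)^i) := by
        funext i
        simp only [hg]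
        push_cast
        rw [pow_add]
        ring
      rw [this, tsum_mul_left, htsum_aff]
      ring
    have hbnd : c * (1/2:ℝ)^κ * (2 * ((n₀:ℝ) + κ) + 4) ≤ 4 * c := by
      have hpos : (0:ℝ) < 2 ^ κ := by positivity
      have h1 : (1/2:ℝ)^κ = 1 / 2^κ := by
        rw [div_pow]; norm_num
      have h2 : c * (1/2:ℝ)^κ * (2 * ((n₀:ℝ) + κ) + 4)
          = c * (2 * ((n₀:ℝ) + κ) + 4) / 2^κ := by rw [h1]; ring
      rw [h2, div_le_iff₀ hpos]
      nlinarith [hpow, hpow2, hc.le]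
    linarith [hle, hgval ▸ hle, hE, hc]
  linarith
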